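/- arXiv:1109.3484 — 2 statements merged into one kernel-verified Lean document; each statement's English description precedes it below -/
import Mathlib

section
/- For the bordered complex Hessian matrix, if ρ is a C² function and Φ is a holomorphic map with complex Jacobian J, then det of the bordered Hessian of ρ∘Φ equals det of the bordered Hessian of ρ (evaluated at Φ(z)) times |det J(z)|². Concretely: det [[0, (ρ∘Φ)_{k̄}],[(ρ∘Φ)_j, (ρ∘Φ)_{jk̄}]] = det [[0, ρ_{k̄}],[ρ_j, ρ_{jk̄}]] · |det J_ℂΦ|². -/
open Complex

/-- The Wirtinger derivative `∂/∂z_j` of a function `f : ℂⁿ → ℂ` at `z`. -/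
noncomputable def wdz (n : ℕ) (f : (Fin n → ℂ) → ℂ) (j : Fin n) (z : Fin n → ℂ) : ℂ :=
  (1/2) * (fderiv ℝ f z (Pi.single j 1) - Complex.I * fderiv ℝ f z (Pi.single j Complex.I))

/-- The Wirtinger derivative `∂/∂z̄_k` of a function `f : ℂⁿ → ℂ` at `z`. -/
noncomputable def wdzbar (n : ℕ) (f : (Fin n → ℂ) → ℂ) (k : Fin n) (z : Fin n → ℂ) : ℂ :=
  (1/2) * (fderiv ℝ f z (Pi.single k 1) + Complex.I * fderiv ℝ f z (Pi.single k Complex.I))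

/-- The bordered complex Hessian `[[0, ρ_{k̄}], [ρ_j, ρ_{jk̄}]]` of `ρ : ℂⁿ → ℝ` at `z`. -/
noncomputable def borderedHessian (n : ℕ) (ρ : (Fin n → ℂ) → ℝ) (z : Fin n → ℂ) :
    Matrix (Fin (n+1)) (Fin (n+1)) ℂ :=
  Matrix.of fun i k =>
    Fin.cases
      (Fin.cases 0 (fun k' => wdzbar n (fun w => ((ρ w : ℝ) : ℂ)) k' z) k)
      (fun j => Fin.cases (wdz n (fun w => ((ρ w : ℝ) : ℂ)) j z)
        (fun k' => wdz n (fun w => wdzbar n (fun w' => ((ρ w' : ℝ) : ℂ)) k' w) j z) k) i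


open Metric MeasureTheory

namespace BHAux


variable {n : ℕ}

lemma termA (A B c : ℂ) : (1/2:ℂ) * ((c.re • A + c.im • B) - Complex.I * ((-c.im) • A + c.re • B)) = c * ((1/2) * (A - Complex.I * B)) := by
  obtain ⟨a, b⟩ := c
  simp only [Complex.real_smul, Complex.mk_eq_add_mul_I, Complex.ofReal_neg]
  linear_combination (b * B / 2) * Complex.I_mul_I

lemma termB (A B c : ℂ) : (1/2:ℂ) * ((c.re • A + c.im • B) + Complex.I * ((-c.im) • A + c.re • B)) = (starRingEnd ℂ) c * ((1/2) * (A + Complex.I * B)) := by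
  obtain ⟨a, b⟩ := c
  simp only [Complex.real_smul, Complex.mk_eq_add_mul_I, Complex.ofReal_neg, map_add, map_mul, Complex.conj_I, Complex.conj_ofReal]
  linear_combination (b * B / 2) * Complex.I_mul_I

lemma vec_decomp (w : Fin n → ℂ) :
    w = ∑ l, ((w l).re • (Pi.single l (1:ℂ) : Fin n → ℂ) + (w l).im • (Pi.single l Complex.I : Fin n → ℂ)) := by
  funext m
  simp only [Finset.sum_apply, Pi.add_apply, Pi.smul_apply, Pi.single_apply]
  rw [Finset.sum_eq_single m]
  · simp [Complex.real_smul, Complex.re_add_im]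
  · intro b _ hb; simp [Ne.symm hb]
  · simp

lemma map_decomp (L : (Fin n → ℂ) →L[ℝ] ℂ) (w : Fin n → ℂ) :
    L w = ∑ l, ((w l).re • L (Pi.single l 1) + (w l).im • L (Pi.single l Complex.I)) := by
  conv_lhs => rw [vec_decomp w]
  rw [map_sum]
  simp

lemma smul_I_apply_re (w : Fin n → ℂ) (l : Fin n) : ((Complex.I • w) l).re = -(w l).im := by
  simp [Complex.mul_re]

lemma smul_I_apply_im (w : Fin n → ℂ) (l : Fin n) : ((Complex.I • w) l).im = (w l).re := by
  simp [Complex.mul_im]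

lemma keyA (L : (Fin n → ℂ) →L[ℝ] ℂ) (w : Fin n → ℂ) :
    (1/2 : ℂ) * (L w - Complex.I * L (Complex.I • w)) =
      ∑ l, w l * ((1/2 : ℂ) * (L (Pi.single l 1) - Complex.I * L (Pi.single l Complex.I))) := by
  rw [map_decomp L w, map_decomp L (Complex.I • w)]
  simp only [smul_I_apply_re, smul_I_apply_im]
  rw [Finset.mul_sum, ← Finset.sum_sub_distrib, Finset.mul_sum]
  exact Finset.sum_congr rfl fun l _ => termA _ _ _

lemma keyB (L : (Fin n → ℂ) →L[ℝ] ℂ) (w : Fin n → ℂ) :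
    (1/2 : ℂ) * (L w + Complex.I * L (Complex.I • w)) =
      ∑ l, (starRingEnd ℂ) (w l) * ((1/2 : ℂ) * (L (Pi.single l 1) + Complex.I * L (Pi.single l Complex.I))) := by
  rw [map_decomp L w, map_decomp L (Complex.I • w)]
  simp only [smul_I_apply_re, smul_I_apply_im]
  rw [Finset.mul_sum, ← Finset.sum_add_distrib, Finset.mul_sum]
  exact Finset.sum_congr rfl fun l _ => termB _ _ _



variable {n : ℕ}



lemma single_I (l : Fin n) : (Pi.single l Complex.I : Fin n → ℂ) = Complex.I • (Pi.single l (1:ℂ) : Fin n → ℂ) := by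
  funext m
  by_cases h : m = l <;> simp [Pi.single_apply, h]

lemma wdz_comp (g : (Fin n → ℂ) → ℂ) (Φ : (Fin n → ℂ) → (Fin n → ℂ)) (z : Fin n → ℂ) (j : Fin n)
    (hg : DifferentiableAt ℝ g (Φ z)) (hΦ : DifferentiableAt ℂ Φ z) :
    wdz n (fun w => g (Φ w)) j z = ∑ l, fderiv ℂ Φ z (Pi.single j 1) l * wdz n g l (Φ z) := by
  have hΦr : DifferentiableAt ℝ Φ z := hΦ.restrictScalars ℝ
  have hcomp : fderiv ℝ (fun w => g (Φ w)) z = (fderiv ℝ g (Φ z)).comp (fderiv ℝ Φ z) :=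
    fderiv_comp z hg hΦr
  have hr : fderiv ℝ Φ z = (fderiv ℂ Φ z).restrictScalars ℝ := (hΦ.hasFDerivAt.restrictScalars ℝ).fderiv
  unfold wdz
  rw [hcomp, hr]
  simp only [ContinuousLinearMap.coe_comp', Function.comp_apply,
    ContinuousLinearMap.coe_restrictScalars']
  have h1 : fderiv ℂ Φ z (Pi.single j Complex.I) = Complex.I • fderiv ℂ Φ z (Pi.single j 1) := by
    rw [single_I, _root_.map_smul]
  rw [h1]
  exact keyA _ _

lemma wdzbar_comp (g : (Fin n → ℂ) → ℂ) (Φ : (Fin n → ℂ) → (Fin n → ℂ)) (z : Fin n → ℂ) (k : Fin n)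
    (hg : DifferentiableAt ℝ g (Φ z)) (hΦ : DifferentiableAt ℂ Φ z) :
    wdzbar n (fun w => g (Φ w)) k z
      = ∑ m, (starRingEnd ℂ) (fderiv ℂ Φ z (Pi.single k 1) m) * wdzbar n g m (Φ z) := by
  have hΦr : DifferentiableAt ℝ Φ z := hΦ.restrictScalars ℝ
  have hcomp : fderiv ℝ (fun w => g (Φ w)) z = (fderiv ℝ g (Φ z)).comp (fderiv ℝ Φ z) :=
    fderiv_comp z hg hΦr
  have hr : fderiv ℝ Φ z = (fderiv ℂ Φ z).restrictScalars ℝ := (hΦ.hasFDerivAt.restrictScalars ℝ).fderiv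
  unfold wdzbar
  rw [hcomp, hr]
  simp only [ContinuousLinearMap.coe_comp', Function.comp_apply,
    ContinuousLinearMap.coe_restrictScalars']
  have h1 : fderiv ℂ Φ z (Pi.single k Complex.I) = Complex.I • fderiv ℂ Φ z (Pi.single k 1) := by
    rw [single_I, _root_.map_smul]
  rw [h1]
  exact keyB _ _

lemma wdz_sum {ι : Type*} (s : Finset ι) (h : ι → (Fin n → ℂ) → ℂ) (j : Fin n) (z : Fin n → ℂ)
    (hd : ∀ i ∈ s, DifferentiableAt ℝ (h i) z) :
    wdz n (fun w => ∑ i ∈ s, h i w) j z = ∑ i ∈ s, wdz n (h i) j z := by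
  unfold wdz
  rw [fderiv_fun_sum hd]
  simp only [ContinuousLinearMap.coe_sum', Finset.sum_apply]
  rw [Finset.mul_sum, ← Finset.sum_sub_distrib, Finset.mul_sum]

lemma wdz_mul (u v : (Fin n → ℂ) → ℂ) (j : Fin n) (z : Fin n → ℂ)
    (hu : DifferentiableAt ℝ u z) (hv : DifferentiableAt ℝ v z) :
    wdz n (fun w => u w * v w) j z = wdz n u j z * v z + u z * wdz n v j z := by
  unfold wdz
  rw [fderiv_fun_mul hu hv]
  simp only [ContinuousLinearMap.add_apply, ContinuousLinearMap.smul_apply, smul_eq_mul]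
  ring

lemma wdz_conj_holo (h : (Fin n → ℂ) → ℂ) (z : Fin n → ℂ) (j : Fin n)
    (hh : DifferentiableAt ℂ h z) :
    wdz n (fun w => (starRingEnd ℂ) (h w)) j z = 0 := by
  have hc : HasFDerivAt (fun w => (starRingEnd ℂ) (h w))
      ((Complex.conjCLE : ℂ →L[ℝ] ℂ).comp ((fderiv ℂ h z).restrictScalars ℝ)) z := by
    exact (Complex.conjCLE.toContinuousLinearMap.hasFDerivAt).comp z
      (hh.hasFDerivAt.restrictScalars ℝ)
  unfold wdz
  rw [hc.fderiv]
  simp only [ContinuousLinearMap.coe_comp', Function.comp_apply,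
    ContinuousLinearMap.coe_restrictScalars', ContinuousLinearEquiv.coe_coe,
    Complex.conjCLE_apply]
  have h1 : fderiv ℂ h z (Pi.single j Complex.I) = Complex.I * fderiv ℂ h z (Pi.single j 1) := by
    rw [single_I, _root_.map_smul, smul_eq_mul]
  rw [h1, map_mul, Complex.conj_I]
  linear_combination ((starRingEnd ℂ) (fderiv ℂ h z (Pi.single j 1)) / 2) * Complex.I_mul_I




variable {n : ℕ}

lemma slice_hasDerivAt (φ : (Fin n → ℂ) → ℂ) (hφ : Differentiable ℂ φ) (w u : Fin n → ℂ) :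
    HasDerivAt (fun t : ℂ => φ (w + t • u)) (fderiv ℂ φ w u) 0 := by
  have h1 : HasDerivAt (fun t : ℂ => w + t • u) u 0 := by
    simpa using ((hasDerivAt_id (0 : ℂ)).smul_const u).const_add w
  have h2 := ((hφ (w + (0 : ℂ) • u)).hasFDerivAt).comp_hasDerivAt 0 h1
  simpa [Function.comp_def] using h2

lemma slice_diffContOnCl (φ : (Fin n → ℂ) → ℂ) (hφ : Differentiable ℂ φ) (w u : Fin n → ℂ) :
    DiffContOnCl ℂ (fun t : ℂ => φ (w + t • u)) (ball 0 1) := by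
  have hdiff : Differentiable ℂ (fun t : ℂ => φ (w + t • u)) :=
    hφ.comp (((differentiable_id).smul_const u).const_add w)
  exact ⟨hdiff.differentiableOn, hdiff.continuous.continuousOn⟩

/-- Local bound on the complex Fréchet derivative of an entire function, via Cauchy estimates. -/
lemma fderiv_bound (φ : (Fin n → ℂ) → ℂ) (hφ : Differentiable ℂ φ) (z₀ : Fin n → ℂ) (r : ℝ)
    (M : ℝ) (hM : ∀ x ∈ closedBall z₀ (r + 1), ‖φ x‖ ≤ M) :
    ∀ w ∈ closedBall z₀ r, ‖fderiv ℂ φ w‖ ≤ n * M := by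
  intro w hw
  have hM0 : 0 ≤ M := le_trans (norm_nonneg _) (hM z₀ (by
    simp only [mem_closedBall, dist_self]
    nlinarith [dist_nonneg (x := w) (y := z₀), mem_closedBall.mp hw]))
  -- bound each partial derivative
  have hpart : ∀ l : Fin n, ‖fderiv ℂ φ w (Pi.single l 1)‖ ≤ M := by
    intro l
    have hu : ‖(Pi.single l 1 : Fin n → ℂ)‖ ≤ 1 := by
      rw [Pi.norm_single]
      simp
    have hder := (slice_hasDerivAt φ hφ w (Pi.single l 1)).deriv
    have hest := Complex.norm_deriv_le_of_forall_mem_sphere_norm_le (c := 0) (R := 1) (C := M) one_pos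
      (slice_diffContOnCl φ hφ w (Pi.single l 1)) ?_
    · rw [hder] at hest
      simpa using hest
    · intro t ht
      apply hM
      have ht1 : ‖t‖ = 1 := by simpa using ht
      rw [mem_closedBall, dist_eq_norm]
      have hw' : ‖w - z₀‖ ≤ r := by rwa [mem_closedBall, dist_eq_norm] at hw
      have : ‖t • (Pi.single l 1 : Fin n → ℂ)‖ ≤ 1 := by
        rw [norm_smul, ht1, one_mul]; exact hu
      have heq : ‖w + t • (Pi.single l 1 : Fin n → ℂ) - z₀‖ = ‖w - z₀ + t • (Pi.single l 1 : Fin n → ℂ)‖ := by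
        rw [add_sub_right_comm]
      rw [heq]
      linarith [norm_add_le (w - z₀) (t • (Pi.single l 1 : Fin n → ℂ))]
  -- conclude operator norm bound
  apply ContinuousLinearMap.opNorm_le_bound _ (by positivity)
  intro x
  have hx : x = ∑ l, x l • (Pi.single l (1:ℂ) : Fin n → ℂ) := by
    funext m
    simp [Finset.sum_apply, Pi.single_apply]
  calc ‖fderiv ℂ φ w x‖ = ‖∑ l, x l • fderiv ℂ φ w (Pi.single l 1)‖ := by
        conv_lhs => rw [hx]
        rw [map_sum]
        simp
    _ ≤ ∑ l, ‖x l • fderiv ℂ φ w (Pi.single l 1)‖ := norm_sum_le _ _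
    _ ≤ ∑ l : Fin n, M * ‖x‖ := by
        apply Finset.sum_le_sum
        intro l _
        rw [norm_smul]
        calc ‖x l‖ * ‖fderiv ℂ φ w (Pi.single l 1)‖ ≤ ‖x‖ * M := by
              apply mul_le_mul (norm_le_pi_norm x l) (hpart l) (norm_nonneg _) (norm_nonneg _)
          _ = M * ‖x‖ := mul_comm _ _
    _ = n * M * ‖x‖ := by
        rw [Finset.sum_const, Finset.card_univ, Fintype.card_fin]
        ring

open scoped Real in
set_option maxHeartbeats 1000000 in
lemma differentiableAt_fderiv_apply (φ : (Fin n → ℂ) → ℂ) (hφ : Differentiable ℂ φ)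
    (v z₀ : Fin n → ℂ) : DifferentiableAt ℂ (fun w => fderiv ℂ φ w v) z₀ := by
  -- uniform bound for φ on a compact ball
  obtain ⟨M, hM⟩ : ∃ M, ∀ x ∈ closedBall z₀ (1 + ‖v‖ + 1), ‖φ x‖ ≤ M :=
    (isCompact_closedBall z₀ _).exists_bound_of_continuousOn hφ.continuous.continuousOn
  have hbound := fderiv_bound φ hφ z₀ (1 + ‖v‖) M hM
  set K : NNReal := Real.toNNReal (n * M) with hK
  have hKnn : ∀ w ∈ closedBall z₀ (1 + ‖v‖), ‖fderiv ℂ φ w‖₊ ≤ K := by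
    intro w hw
    rw [← NNReal.coe_le_coe, coe_nnnorm, hK, Real.coe_toNNReal']
    exact le_trans (hbound w hw) (le_max_left _ _)
  have hlip : LipschitzOnWith K φ (closedBall z₀ (1 + ‖v‖)) :=
    (convex_closedBall _ _).lipschitzOnWith_of_nnnorm_hasFDerivWithin_le
      (fun x _ => (hφ x).hasFDerivAt.hasFDerivWithinAt) (fun x hx => hKnn x hx)
  -- the integrand
  set c : ℝ → ℂ := fun θ => circleMap 0 1 θ * Complex.I * (circleMap 0 1 θ) ^ (-2 : ℤ) with hc
  set F : (Fin n → ℂ) → ℝ → ℂ := fun w θ => c θ * φ (w + circleMap 0 1 θ • v) with hF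
  set F' : ℝ → (Fin n → ℂ) →L[ℂ] ℂ :=
    fun θ => c θ • fderiv ℂ φ (z₀ + circleMap 0 1 θ • v) with hF'
  have hcm : ∀ θ, circleMap 0 1 θ ≠ 0 := fun θ => circleMap_ne_center one_ne_zero
  have hccont : Continuous c := by
    apply ((continuous_circleMap 0 1).mul continuous_const).mul
    exact (continuous_circleMap 0 1).zpow₀ _ (fun θ => Or.inl (hcm θ))
  have hnc : ∀ θ, ‖c θ‖ = 1 := by
    intro θ
    simp only [hc, norm_mul, norm_zpow, Complex.norm_I, norm_circleMap_zero]
    norm_num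
  -- integral representation of the derivative
  have hrep : ∀ w, fderiv ℂ φ w v
      = (2 * ↑π * Complex.I)⁻¹ • ∫ θ in Set.Ioc 0 (2 * π), F w θ := by
    intro w
    have h1 : deriv (fun t : ℂ => φ (w + t • v)) 0 = (2 * ↑π * Complex.I)⁻¹ •
        ∮ z in C(0, 1), (z - 0) ^ (-2 : ℤ) • φ (w + z • v) := by
      have h0 := (slice_diffContOnCl φ hφ w v).deriv_eq_smul_circleIntegral one_pos
      have hI : (2 * ↑π * Complex.I) ≠ 0 := by simp [Real.pi_ne_zero, Complex.I_ne_zero]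
      simp only [zpow_neg, one_div, zpow_ofNat] at h0 ⊢
      rw [h0, smul_smul, inv_mul_cancel₀ hI, one_smul]
    rw [(slice_hasDerivAt φ hφ w v).deriv] at h1
    rw [h1]
    congr 1
    rw [circleIntegral, intervalIntegral.integral_of_le (by positivity : (0:ℝ) ≤ 2 * π)]
    congr 1
    funext θ
    simp only [hF, hc, deriv_circleMap, smul_eq_mul, sub_zero]
    ring
  -- measurability and integrability
  set μ : Measure ℝ := volume.restrict (Set.Ioc 0 (2 * π)) with hμ
  have hFcont : ∀ w, Continuous (F w) := by
    intro w
    exact hccont.mul (hφ.continuous.comp (continuous_const.add ((continuous_circleMap 0 1).smul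
      continuous_const)))
  have hF_meas : ∀ᶠ x in nhds z₀, AEStronglyMeasurable (F x) μ :=
    Filter.Eventually.of_forall fun x => (hFcont x).aestronglyMeasurable
  have hF_int : Integrable (F z₀) μ := by
    rw [hμ]
    exact (hFcont z₀).integrableOn_Ioc
  borelize ((Fin n → ℂ) →L[ℂ] ℂ)
  have hF'_meas : AEStronglyMeasurable F' μ := by
    apply StronglyMeasurable.aestronglyMeasurable
    apply StronglyMeasurable.smul hccont.stronglyMeasurable
    apply Measurable.stronglyMeasurable
    exact (measurable_fderiv ℂ φ).comp
      (continuous_const.add ((continuous_circleMap 0 1).smul continuous_const)).measurable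
  have h_lip : ∀ᵐ θ ∂μ, LipschitzOnWith (Real.nnabs ((K : ℝ))) (fun x => F x θ) (ball z₀ 1) := by
    apply Filter.Eventually.of_forall
    intro θ
    have hmt : Set.MapsTo (fun x : Fin n → ℂ => x + circleMap 0 1 θ • v)
        (ball z₀ 1) (closedBall z₀ (1 + ‖v‖)) := by
      intro x hx
      rw [mem_closedBall, dist_eq_norm]
      have h1 : x + circleMap 0 1 θ • v - z₀ = (x - z₀) + circleMap 0 1 θ • v := by
        ring
      rw [h1]
      have h2 : ‖circleMap 0 1 θ • v‖ = ‖v‖ := by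
        rw [norm_smul]
        simp [norm_circleMap_zero]
      have h3 : ‖x - z₀‖ < 1 := by rwa [mem_ball, dist_eq_norm] at hx
      calc ‖(x - z₀) + circleMap 0 1 θ • v‖ ≤ ‖x - z₀‖ + ‖circleMap 0 1 θ • v‖ := norm_add_le _ _
        _ ≤ 1 + ‖v‖ := by rw [h2]; linarith
    have l1 : LipschitzWith 1 (fun x : Fin n → ℂ => x + circleMap 0 1 θ • v) := by
      apply LipschitzWith.of_dist_le_mul
      intro x y
      simp [dist_add_right]
    have l2 : LipschitzOnWith (K * 1) (fun x : Fin n → ℂ => φ (x + circleMap 0 1 θ • v))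
        (ball z₀ 1) := hlip.comp (l1.lipschitzOnWith (s := ball z₀ 1)) hmt
    have l3 : LipschitzWith ‖c θ‖₊ (fun y : ℂ => c θ * y) := by
      apply LipschitzWith.of_dist_le_mul
      intro x y
      rw [dist_eq_norm, ← mul_sub, norm_mul, coe_nnnorm, dist_eq_norm]
    have l4 := l3.comp_lipschitzOnWith l2
    have hc1 : ‖c θ‖₊ = 1 := by
      ext
      rw [coe_nnnorm, hnc θ]
      rfl
    have hnab : Real.nnabs ((K : ℝ)) = K := by
      simp
    rw [hnab]
    simpa [hc1, one_mul, mul_one, Function.comp_def] using l4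
  have hbint : Integrable (fun _ : ℝ => (K : ℝ)) μ := by
    rw [hμ]
    exact integrableOn_const measure_Ioc_lt_top.ne
  have h_diff : ∀ᵐ θ ∂μ, HasFDerivAt (fun x => F x θ) (F' θ) z₀ := by
    apply Filter.Eventually.of_forall
    intro θ
    have h1 : HasFDerivAt (fun x : Fin n → ℂ => x + circleMap 0 1 θ • v)
        (ContinuousLinearMap.id ℂ (Fin n → ℂ)) z₀ := (hasFDerivAt_id z₀).add_const _
    have h2 := ((hφ (z₀ + circleMap 0 1 θ • v)).hasFDerivAt.comp z₀ h1).const_smul (c θ)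
    simpa [hF, hF', smul_eq_mul, Function.comp_def, Pi.smul_def] using h2
  have main := (_root_.hasFDerivAt_integral_of_dominated_loc_of_lip (ball_mem_nhds z₀ one_pos) hF_meas hF_int hF'_meas
    h_lip hbint h_diff).2
  have heq : (fun w => fderiv ℂ φ w v)
      = fun w => (2 * ↑π * Complex.I)⁻¹ • ∫ θ, F w θ ∂μ := by
    funext w
    rw [hrep w, hμ]
  rw [heq]
  exact main.differentiableAt.fun_const_smul _



variable {n : ℕ}

lemma contDiff_coe (ρ : (Fin n → ℂ) → ℝ) (hρ : ContDiff ℝ 2 ρ) :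
    ContDiff ℝ 2 (fun w => ((ρ w : ℝ) : ℂ)) :=
  Complex.ofRealCLM.contDiff.comp hρ

lemma contDiff_wdzbar (f : (Fin n → ℂ) → ℂ) (hf : ContDiff ℝ 2 f) (m : Fin n) :
    ContDiff ℝ 1 (wdzbar n f m) := by
  unfold wdzbar
  have h1 : ContDiff ℝ 1 (fun z => fderiv ℝ f z (Pi.single m 1)) :=
    (hf.fderiv_right (by norm_num)).clm_apply contDiff_const
  have h2 : ContDiff ℝ 1 (fun z => fderiv ℝ f z (Pi.single m Complex.I)) :=
    (hf.fderiv_right (by norm_num)).clm_apply contDiff_const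
  exact contDiff_const.mul (h1.add (contDiff_const.mul h2))

def finOneSum (n : ℕ) : Fin (n+1) ≃ (Fin 1 ⊕ Fin n) where
  toFun := Fin.cases (Sum.inl 0) Sum.inr
  invFun := Sum.elim (fun _ => 0) Fin.succ
  left_inv i := by
    induction i using Fin.cases <;> simp
  right_inv s := by
    rcases s with s | s
    · simp only [Sum.elim_inl, Fin.cases_zero]
      exact congrArg Sum.inl (Subsingleton.elim _ _)
    · simp

@[simp] lemma finOneSum_zero : finOneSum n 0 = Sum.inl 0 := by
  simp [finOneSum]

@[simp] lemma finOneSum_succ (j : Fin n) : finOneSum n j.succ = Sum.inr j := by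
  simp [finOneSum]


end BHAux

open BHAux in
/-- If `ρ` is `C²` and `Φ` is holomorphic with complex Jacobian matrix `J`, then
`det [[0, (ρ∘Φ)_{k̄}],[(ρ∘Φ)_j, (ρ∘Φ)_{jk̄}]] = det [[0, ρ_{k̄}],[ρ_j, ρ_{jk̄}]](Φ(z)) · |det J(z)|²`. -/
theorem bordered_hessian_transformation (n : ℕ) (ρ : (Fin n → ℂ) → ℝ)
    (Φ : (Fin n → ℂ) → (Fin n → ℂ))
    (hρ : ContDiff ℝ 2 ρ) (hΦ : Differentiable ℂ Φ) (z : Fin n → ℂ)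
    (J : Matrix (Fin n) (Fin n) ℂ)
    (hJ : ∀ j k, J j k = fderiv ℂ Φ z (Pi.single k 1) j) :
    (borderedHessian n (ρ ∘ Φ) z).det =
      (borderedHessian n ρ (Φ z)).det * ((‖J.det‖ : ℝ) : ℂ) ^ 2 := by
  classical
  -- basic differentiability facts
  have hf : ContDiff ℝ 2 (fun w => ((ρ w : ℝ) : ℂ)) := contDiff_coe ρ hρ
  have hf1 : Differentiable ℝ (fun w => ((ρ w : ℝ) : ℂ)) := hf.differentiable (by norm_num)
  have hgm : ∀ m, Differentiable ℝ (wdzbar n (fun w => ((ρ w : ℝ) : ℂ)) m) :=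
    fun m => (contDiff_wdzbar _ hf m).differentiable one_ne_zero
  -- first order entries
  have hrow : ∀ k, wdzbar n (fun w => (((ρ ∘ Φ) w : ℝ) : ℂ)) k z
      = ∑ m, (starRingEnd ℂ) (J m k) * wdzbar n (fun w => ((ρ w : ℝ) : ℂ)) m (Φ z) := by
    intro k
    have h := wdzbar_comp (fun w => ((ρ w : ℝ) : ℂ)) Φ z k (hf1 _) (hΦ z)
    rw [show wdzbar n (fun w => (((ρ ∘ Φ) w : ℝ) : ℂ)) k z
        = wdzbar n (fun w => (((ρ (Φ w) : ℝ)) : ℂ)) k z from rfl, h]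
    exact Finset.sum_congr rfl fun m _ => by rw [hJ m k]
  have hcol : ∀ j, wdz n (fun w => (((ρ ∘ Φ) w : ℝ) : ℂ)) j z
      = ∑ l, J l j * wdz n (fun w => ((ρ w : ℝ) : ℂ)) l (Φ z) := by
    intro j
    have h := wdz_comp (fun w => ((ρ w : ℝ) : ℂ)) Φ z j (hf1 _) (hΦ z)
    rw [show wdz n (fun w => (((ρ ∘ Φ) w : ℝ) : ℂ)) j z
        = wdz n (fun w => (((ρ (Φ w) : ℝ)) : ℂ)) j z from rfl, h]
    exact Finset.sum_congr rfl fun l _ => by rw [hJ l j]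
  -- complex differentiability of the Jacobian entries
  have hJfun : ∀ (k m : Fin n), DifferentiableAt ℂ (fun w => fderiv ℂ Φ w (Pi.single k 1) m) z := by
    intro k m
    have hcomp : ∀ w, fderiv ℂ Φ w (Pi.single k 1) m
        = fderiv ℂ (fun w' => Φ w' m) w (Pi.single k 1) := by
      intro w
      have ht : HasFDerivAt (fun w' => Φ w' m)
          ((ContinuousLinearMap.proj m).comp (fderiv ℂ Φ w)) w := by
        exact (ContinuousLinearMap.proj m).hasFDerivAt.comp w (hΦ w).hasFDerivAt
      rw [ht.fderiv]
      rfl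
    rw [show (fun w => fderiv ℂ Φ w (Pi.single k 1) m)
        = fun w => fderiv ℂ (fun w' => Φ w' m) w (Pi.single k 1) from funext hcomp]
    exact differentiableAt_fderiv_apply (fun w' => Φ w' m)
      (fun w => (ContinuousLinearMap.proj (R := ℂ) (φ := fun _ : Fin n => ℂ) m).differentiableAt.comp w (hΦ w))
      (Pi.single k 1) z
  -- second order entries
  have hblock : ∀ j k, wdz n (fun w => wdzbar n (fun w' => (((ρ ∘ Φ) w' : ℝ) : ℂ)) k w) j z
      = ∑ m, ∑ l, (starRingEnd ℂ) (J m k)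
          * (J l j * wdz n (wdzbar n (fun w => ((ρ w : ℝ) : ℂ)) m) l (Φ z)) := by
    intro j k
    have hstep1 : (fun w => wdzbar n (fun w' => (((ρ ∘ Φ) w' : ℝ) : ℂ)) k w)
        = fun w => ∑ m, (starRingEnd ℂ) (fderiv ℂ Φ w (Pi.single k 1) m)
            * wdzbar n (fun w' => ((ρ w' : ℝ) : ℂ)) m (Φ w) := by
      funext w
      exact wdzbar_comp (fun w' => ((ρ w' : ℝ) : ℂ)) Φ w k (hf1 _) (hΦ w)
    rw [hstep1]
    have hdu : ∀ m : Fin n, DifferentiableAt ℝ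
        (fun w => (starRingEnd ℂ) (fderiv ℂ Φ w (Pi.single k 1) m)) z :=
      fun m => (Complex.conjCLE.differentiable.differentiableAt).comp z
        ((hJfun k m).restrictScalars ℝ)
    have hdv : ∀ m : Fin n, DifferentiableAt ℝ
        (fun w => wdzbar n (fun w' => ((ρ w' : ℝ) : ℂ)) m (Φ w)) z :=
      fun m => (hgm m (Φ z)).comp z ((hΦ z).restrictScalars ℝ)
    rw [wdz_sum Finset.univ _ j z (fun m _ => (hdu m).fun_mul (hdv m))]
    refine Finset.sum_congr rfl fun m _ => ?_
    rw [wdz_mul _ _ j z (hdu m) (hdv m), wdz_conj_holo _ z j (hJfun k m),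
      wdz_comp _ Φ z j (hgm m (Φ z)) (hΦ z), zero_mul, zero_add, ← hJ m k, Finset.mul_sum]
    exact Finset.sum_congr rfl fun l _ => by rw [← hJ l j]
  -- the matrix identity
  have hM : borderedHessian n (ρ ∘ Φ) z =
      ((Matrix.fromBlocks (1 : Matrix (Fin 1) (Fin 1) ℂ) 0 0 J.transpose).submatrix
        ⇑(finOneSum n) ⇑(finOneSum n))
      * borderedHessian n ρ (Φ z)
      * ((Matrix.fromBlocks (1 : Matrix (Fin 1) (Fin 1) ℂ) 0 0
          (J.map (starRingEnd ℂ))).submatrix ⇑(finOneSum n) ⇑(finOneSum n)) := by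
    refine Matrix.ext fun i k => ?_
    refine Fin.cases (Fin.cases ?_ (fun k' => ?_) k) (fun j => Fin.cases ?_ (fun k' => ?_) k) i
    · -- (0,0)
      simp [borderedHessian, Matrix.mul_apply, Fin.sum_univ_succ]
    · -- (0, succ k')
      simp only [borderedHessian, Matrix.of_apply, Fin.cases_zero, Fin.cases_succ,
        Matrix.mul_apply, Matrix.submatrix_apply, finOneSum_zero, finOneSum_succ,
        Matrix.fromBlocks_apply₁₁, Matrix.fromBlocks_apply₁₂, Matrix.fromBlocks_apply₂₁,
        Matrix.fromBlocks_apply₂₂, Matrix.one_apply_eq, Matrix.zero_apply, Matrix.map_apply,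
        Matrix.transpose_apply, Fin.sum_univ_succ, zero_mul, mul_zero, zero_add, add_zero,
        Finset.sum_const_zero, one_mul, mul_one]
      rw [hrow k']
      exact Finset.sum_congr rfl fun m _ => by ring
    · -- (succ j, 0)
      simp only [borderedHessian, Matrix.of_apply, Fin.cases_zero, Fin.cases_succ,
        Matrix.mul_apply, Matrix.submatrix_apply, finOneSum_zero, finOneSum_succ,
        Matrix.fromBlocks_apply₁₁, Matrix.fromBlocks_apply₁₂, Matrix.fromBlocks_apply₂₁,
        Matrix.fromBlocks_apply₂₂, Matrix.one_apply_eq, Matrix.zero_apply, Matrix.map_apply,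
        Matrix.transpose_apply, Fin.sum_univ_succ, zero_mul, mul_zero, zero_add, add_zero,
        Finset.sum_const_zero, one_mul, mul_one]
      rw [hcol j]
    · -- (succ j, succ k')
      simp only [borderedHessian, Matrix.of_apply, Fin.cases_zero, Fin.cases_succ,
        Matrix.mul_apply, Matrix.submatrix_apply, finOneSum_zero, finOneSum_succ,
        Matrix.fromBlocks_apply₁₁, Matrix.fromBlocks_apply₁₂, Matrix.fromBlocks_apply₂₁,
        Matrix.fromBlocks_apply₂₂, Matrix.one_apply_eq, Matrix.zero_apply, Matrix.map_apply,
        Matrix.transpose_apply, Fin.sum_univ_succ, zero_mul, mul_zero, zero_add, add_zero,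
        Finset.sum_const_zero, one_mul, mul_one]
      rw [hblock j k']
      refine Finset.sum_congr rfl fun m _ => ?_
      rw [Finset.sum_mul]
      refine Finset.sum_congr rfl fun l _ => by ring
  -- determinants
  rw [hM, Matrix.det_mul, Matrix.det_mul, Matrix.det_submatrix_equiv_self,
    Matrix.det_submatrix_equiv_self, Matrix.det_fromBlocks_zero₂₁, Matrix.det_fromBlocks_zero₂₁,
    Matrix.det_one, Matrix.det_transpose]
  have hconj : (J.map (starRingEnd ℂ)).det = (starRingEnd ℂ) J.det := by
    rw [RingHom.map_det]
    rfl
  rw [hconj]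
  have habs : ((‖J.det‖ : ℝ) : ℂ) ^ 2 = J.det * (starRingEnd ℂ) J.det := by
    rw [← Complex.ofReal_pow, Complex.sq_norm, Complex.mul_conj]
  rw [habs]
  ring
end

section
/- There is no constant M > 0 such that F_B^Ω(z,ξ) ≤ M·F_S^Ω(z,ξ) for all bounded domains Ω ⊂ ℂ with smooth boundary and all (z,ξ) ∈ TΩ, and there is no constant m > 0 such that F_B^Ω(z,ξ) ≥ m·F_S^Ω(z,ξ) universally. Specifically, on the annuli Ω_r = {r<|z|<1}: F_S^{Ω_r}(√r,1)/F_B^{Ω_r}(√r,1) → ∞ and F_S^{Ω_r}(r^{1/5},1)/F_B^{Ω_r}(r^{1/5},1) → 0 as r → 0⁺. -/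
open Real Filter Topology

/-- There is no universal constant comparing the Bergman and Szegő metrics: for the annuli
`Ω_r = {r < |z| < 1}`, writing `FS r t`, `FB r t` for the Szegő and Bergman metrics of `Ω_r`
at the point `t` in the unit direction, the four limits
`√r·FS r √r → 1/2`, `FB r √r/√(log(1/r)) → 2`, `FS r r^{1/5} → 1`,
`FB r r^{1/5}/√(log(1/r)) → √2` imply that
`FS r √r / FB r √r → ∞` and `FS r r^{1/5} / FB r r^{1/5} → 0` as `r → 0⁺`; in particular
there is no constant `M > 0` with `FB ≤ M·FS` on all annuli, and no constant `m > 0` with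
`m·FS ≤ FB` on all annuli. -/
theorem no_universal_bergman_szego_comparison (FS FB : ℝ → ℝ → ℝ)
    (hpos : ∀ r ∈ Set.Ioo (0:ℝ) 1, 0 < FS r (Real.sqrt r) ∧ 0 < FB r (Real.sqrt r) ∧
      0 < FS r (r ^ ((1:ℝ)/5)) ∧ 0 < FB r (r ^ ((1:ℝ)/5)))
    (h1 : Tendsto (fun r : ℝ => Real.sqrt r * FS r (Real.sqrt r)) (𝓝[>] (0:ℝ)) (𝓝 (1/2)))
    (h2 : Tendsto (fun r : ℝ => FB r (Real.sqrt r) / Real.sqrt (Real.log (1/r)))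
      (𝓝[>] (0:ℝ)) (𝓝 2))
    (h3 : Tendsto (fun r : ℝ => FS r (r ^ ((1:ℝ)/5))) (𝓝[>] (0:ℝ)) (𝓝 1))
    (h4 : Tendsto (fun r : ℝ => FB r (r ^ ((1:ℝ)/5)) / Real.sqrt (Real.log (1/r)))
      (𝓝[>] (0:ℝ)) (𝓝 (Real.sqrt 2))) :
    Tendsto (fun r : ℝ => FS r (Real.sqrt r) / FB r (Real.sqrt r)) (𝓝[>] (0:ℝ)) atTop ∧
    Tendsto (fun r : ℝ => FS r (r ^ ((1:ℝ)/5)) / FB r (r ^ ((1:ℝ)/5))) (𝓝[>] (0:ℝ)) (𝓝 0) ∧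
    (¬ ∃ M : ℝ, 0 < M ∧ ∀ r ∈ Set.Ioo (0:ℝ) 1,
      FB r (r ^ ((1:ℝ)/5)) ≤ M * FS r (r ^ ((1:ℝ)/5))) ∧
    (¬ ∃ m : ℝ, 0 < m ∧ ∀ r ∈ Set.Ioo (0:ℝ) 1,
      m * FS r (Real.sqrt r) ≤ FB r (Real.sqrt r)) := by
  have hIoo : ∀ᶠ r in 𝓝[>] (0:ℝ), r ∈ Set.Ioo (0:ℝ) 1 := by
    filter_upwards [Ioo_mem_nhdsGT one_pos] with r hr
    exact hr
  -- log(1/r) → ∞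
  have hlog : Tendsto (fun r : ℝ => Real.log (1/r)) (𝓝[>] (0:ℝ)) atTop := by
    have h0 : Tendsto (fun r : ℝ => -Real.log r) (𝓝[>] (0:ℝ)) atTop :=
      tendsto_neg_atBot_atTop.comp Real.tendsto_log_nhdsGT_zero
    refine h0.congr fun r => ?_
    rw [one_div, Real.log_inv]
  have hsqrtTop : Tendsto Real.sqrt atTop atTop := by
    refine (tendsto_rpow_atTop one_half_pos).congr' ?_
    filter_upwards [eventually_ge_atTop (0:ℝ)] with x hx
    rw [Real.sqrt_eq_rpow]
  have hsqlog : Tendsto (fun r : ℝ => Real.sqrt (Real.log (1/r))) (𝓝[>] (0:ℝ)) atTop :=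
    hsqrtTop.comp hlog
  have hsqlog_pos : ∀ᶠ r in 𝓝[>] (0:ℝ), 0 < Real.sqrt (Real.log (1/r)) :=
    hsqlog.eventually_gt_atTop 0
  -- √r · √(log(1/r)) → 0
  have hrl : Tendsto (fun r : ℝ => Real.sqrt r * Real.sqrt (Real.log (1/r)))
      (𝓝[>] (0:ℝ)) (𝓝 0) := by
    have hbase : Tendsto (fun r : ℝ => r * Real.log (1/r)) (𝓝[>] (0:ℝ)) (𝓝 0) := by
      have h0 := tendsto_log_mul_rpow_nhdsGT_zero one_pos
      have h' : Tendsto (fun r : ℝ => -(Real.log r * r ^ (1:ℝ))) (𝓝[>] (0:ℝ)) (𝓝 0) := by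
        simpa using h0.neg
      refine h'.congr fun r => ?_
      rw [one_div, Real.log_inv, Real.rpow_one]; ring
    have h1' := (Real.continuous_sqrt.tendsto 0).comp hbase
    simp only [Real.sqrt_zero] at h1'
    refine h1'.congr' ?_
    filter_upwards [self_mem_nhdsWithin] with r (hr : 0 < r)
    simp only [Function.comp_apply]
    rw [Real.sqrt_mul hr.le]
  -- √r · FB r √r → 0
  have hrFB : Tendsto (fun r : ℝ => Real.sqrt r * FB r (Real.sqrt r)) (𝓝[>] (0:ℝ)) (𝓝 0) := by
    have := hrl.mul h2
    simp only [zero_mul] at this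
    refine this.congr' ?_
    filter_upwards [hsqlog_pos] with r hr
    field_simp
  -- Part 1
  have part1 : Tendsto (fun r : ℝ => FS r (Real.sqrt r) / FB r (Real.sqrt r))
      (𝓝[>] (0:ℝ)) atTop := by
    have hpos' : ∀ᶠ r in 𝓝[>] (0:ℝ), 0 < Real.sqrt r * FB r (Real.sqrt r) := by
      filter_upwards [hIoo] with r hr
      exact mul_pos (Real.sqrt_pos.mpr hr.1) (hpos r hr).2.1
    have hinv : Tendsto (fun r : ℝ => (Real.sqrt r * FB r (Real.sqrt r))⁻¹)
        (𝓝[>] (0:ℝ)) atTop :=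
      tendsto_inv_nhdsGT_zero.comp
        (tendsto_nhdsWithin_iff.mpr ⟨hrFB, hpos'⟩)
    have := h1.pos_mul_atTop (by norm_num : (0:ℝ) < 1/2) hinv
    refine this.congr' ?_
    filter_upwards [hIoo] with r hr
    have hs : Real.sqrt r ≠ 0 := (Real.sqrt_pos.mpr hr.1).ne'
    have hb : FB r (Real.sqrt r) ≠ 0 := (hpos r hr).2.1.ne'
    field_simp
  -- Part 2
  have part2 : Tendsto (fun r : ℝ => FS r (r ^ ((1:ℝ)/5)) / FB r (r ^ ((1:ℝ)/5)))
      (𝓝[>] (0:ℝ)) (𝓝 0) := by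
    have hinvlog : Tendsto (fun r : ℝ => (Real.sqrt (Real.log (1/r)))⁻¹)
        (𝓝[>] (0:ℝ)) (𝓝 0) := hsqlog.inv_tendsto_atTop
    have := (h3.mul hinvlog).div h4 (by positivity : Real.sqrt 2 ≠ 0)
    simp only [mul_zero, one_mul, zero_div] at this
    refine this.congr' ?_
    filter_upwards [hsqlog_pos, hIoo] with r hl hr
    have hFB := (hpos r hr).2.2.2
    simp only [Pi.div_apply]
    field_simp
  refine ⟨part1, part2, ?_, ?_⟩
  · rintro ⟨M, hM, hMle⟩
    -- FB/FS → ∞ at r^{1/5}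
    have hratio : Tendsto (fun r : ℝ => FB r (r ^ ((1:ℝ)/5)) / FS r (r ^ ((1:ℝ)/5)))
        (𝓝[>] (0:ℝ)) atTop := by
      have hpos' : ∀ᶠ r in 𝓝[>] (0:ℝ),
          0 < FS r (r ^ ((1:ℝ)/5)) / FB r (r ^ ((1:ℝ)/5)) := by
        filter_upwards [hIoo] with r hr
        exact div_pos (hpos r hr).2.2.1 (hpos r hr).2.2.2
      have := tendsto_inv_nhdsGT_zero.comp
        (tendsto_nhdsWithin_iff.mpr ⟨part2, hpos'⟩)
      refine this.congr' ?_
      filter_upwards [hIoo] with r hr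
      simp [Function.comp, one_div, inv_div]
    have := (hratio.eventually_gt_atTop M).and hIoo
    obtain ⟨r, hgt, hr⟩ := this.exists
    have hFS := (hpos r hr).2.2.1
    have : FB r (r ^ ((1:ℝ)/5)) / FS r (r ^ ((1:ℝ)/5)) ≤ M :=
      (div_le_iff₀ hFS).mpr (hMle r hr)
    linarith
  · rintro ⟨m, hm, hmle⟩
    have := (part1.eventually_gt_atTop (1/m)).and hIoo
    obtain ⟨r, hgt, hr⟩ := this.exists
    have hFB := (hpos r hr).2.1
    have hFS := (hpos r hr).1
    have h1' : FS r (Real.sqrt r) / FB r (Real.sqrt r) ≤ 1/m := by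
      rw [div_le_div_iff₀ hFB hm]
      nlinarith [hmle r hr]
    linarith
end
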